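/- Let K ≥ 2 and v ∈ ℝ^K with mean v̄ = (1/K) Σ_{i=1}^K v_i, and assume v_k ≠ v̄ for every k ∈ {1,…,K}. Set w_k = v_k − v̄, w_k⁺ = max(0, w_k), w_k⁻ = max(0, −w_k), and m_k = e^{−w_k⁻}(e^{w_k⁺} − 1 + ∏_{ℓ≠k}(1 − e^{−w_ℓ⁻})). Then for every k ∈ {1,…,K}, the post-hoc evidential probability 𝟙{m_k ≠ 0}·e^{w_k} / Σ_{ℓ=1}^K 𝟙{m_ℓ ≠ 0}·e^{w_ℓ} equals EvSoftmax(v)_k, and in particular both denominators are nonzero. -/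

import Mathlib

open Finset

/-- The ev-softmax function:
`EvSoftmax(v)_k = 𝟙{v_k ≥ v̄} e^{v_k} / ∑_l 𝟙{v_l ≥ v̄} e^{v_l}`,
where `v̄` is the arithmetic mean of `v`. -/
noncomputable def evSoftmax {K : ℕ} (v : Fin K → ℝ) (k : Fin K) : ℝ :=
  (if (∑ i : Fin K, v i) / K ≤ v k then Real.exp (v k) else 0) /
    ∑ l : Fin K, (if (∑ i : Fin K, v i) / K ≤ v l then Real.exp (v l) else 0)

/-- If `v ∈ ℝ^K` (`K ≥ 2`) has `v k ≠ v̄` for every `k`, then with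
`w k = v k - v̄` and belief masses `m k`, the post-hoc evidential probability
`𝟙{m k ≠ 0} e^{w k} / ∑_l 𝟙{m l ≠ 0} e^{w l}` equals `EvSoftmax(v)_k` for every
`k`, and both denominators are nonzero. -/
theorem posthoc_evidential_eq_evSoftmax
    (K : ℕ) (hK : 2 ≤ K) (v : Fin K → ℝ)
    (vbar : ℝ) (hvbar : vbar = (∑ i : Fin K, v i) / K)
    (hne : ∀ k, v k ≠ vbar)
    (w : Fin K → ℝ) (hw : ∀ k, w k = v k - vbar)
    (wpos : Fin K → ℝ) (hwpos : ∀ k, wpos k = max 0 (w k))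
    (wneg : Fin K → ℝ) (hwneg : ∀ k, wneg k = max 0 (-w k))
    (m : Fin K → ℝ)
    (hm : ∀ k, m k = Real.exp (-wneg k) *
        (Real.exp (wpos k) - 1 + ∏ l ∈ univ.erase k, (1 - Real.exp (-wneg l)))) :
    (∑ l : Fin K, (if m l ≠ 0 then Real.exp (w l) else 0)) ≠ 0 ∧
    (∑ l : Fin K, (if vbar ≤ v l then Real.exp (v l) else 0)) ≠ 0 ∧
    ∀ k, (if m k ≠ 0 then Real.exp (w k) else 0) /
        (∑ l : Fin K, (if m l ≠ 0 then Real.exp (w l) else 0)) = evSoftmax v k := by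
  have hK0 : (K : ℝ) ≠ 0 := by positivity
  have hwne : ∀ k, w k ≠ 0 := fun k => by
    rw [hw]; exact sub_ne_zero.mpr (hne k)
  have hsumw : ∑ l : Fin K, w l = 0 := by
    simp only [hw, Finset.sum_sub_distrib, Finset.sum_const, Finset.card_univ,
      Fintype.card_fin, nsmul_eq_mul, hvbar]
    field_simp
    ring
  have hprod_nonneg : ∀ k, 0 ≤ ∏ l ∈ univ.erase k, (1 - Real.exp (-wneg l)) := by
    intro k
    refine Finset.prod_nonneg fun l _ => ?_
    have h1 : Real.exp (-wneg l) ≤ 1 := by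
      rw [Real.exp_le_one_iff]
      have : 0 ≤ wneg l := by rw [hwneg]; exact le_max_left _ _
      linarith
    linarith
  have hm_iff : ∀ k, m k ≠ 0 ↔ vbar < v k := by
    intro k
    rcases lt_or_gt_of_ne (hwne k) with hneg | hpos
    · constructor
      · intro h
        exfalso; apply h
        have hex : ∃ l ∈ univ.erase k, 0 < w l := by
          by_contra hno
          push_neg at hno
          have hsum : ∑ l ∈ univ.erase k, w l ≤ 0 :=
            Finset.sum_nonpos fun l hl => le_of_lt (lt_of_le_of_ne (hno l hl) (hwne l))
          have := Finset.sum_erase_add univ w (Finset.mem_univ k)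
          rw [hsumw] at this
          linarith
        obtain ⟨l, hl, hwl⟩ := hex
        have hwnegl : wneg l = 0 := by
          rw [hwneg]; exact max_eq_left (by linarith)
        have hwposk : wpos k = 0 := by
          rw [hwpos]; exact max_eq_left (by linarith)
        have hprod0 : ∏ l ∈ univ.erase k, (1 - Real.exp (-wneg l)) = 0 :=
          Finset.prod_eq_zero hl (by rw [hwnegl]; simp)
        rw [hm, hwposk, hprod0]
        simp
      · intro h
        rw [hw k] at hneg; linarith
    · constructor
      · intro _
        have := hw k
        rw [hw k] at hpos; linarith
      · intro _
        have hwnegk : wneg k = 0 := by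
          rw [hwneg]; exact max_eq_left (by linarith)
        have hwposk : wpos k = w k := by
          rw [hwpos]; exact max_eq_right (le_of_lt hpos)
        rw [hm, hwnegk, hwposk]
        have h1 : 1 < Real.exp (w k) := by
          rw [show (1:ℝ) = Real.exp 0 by simp]
          exact Real.exp_lt_exp.mpr hpos
        have h2 := hprod_nonneg k
        refine mul_ne_zero (Real.exp_ne_zero _) (ne_of_gt ?_)
        linarith
  -- termwise equality of sums
  have hterm : ∀ l, (if m l ≠ 0 then Real.exp (w l) else 0) =
      (if vbar ≤ v l then Real.exp (v l) else 0) * Real.exp (-vbar) := by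
    intro l
    have hiff : (m l ≠ 0) ↔ (vbar ≤ v l) := by
      rw [hm_iff l]
      constructor
      · exact le_of_lt
      · intro h; exact lt_of_le_of_ne h (fun hc => hne l hc.symm)
    by_cases h : m l ≠ 0
    · rw [if_pos h, if_pos (hiff.mp h), hw, sub_eq_add_neg, Real.exp_add]
    · rw [if_neg h, if_neg (fun hc => h (hiff.mpr hc))]; ring
  have hS : (∑ l : Fin K, (if m l ≠ 0 then Real.exp (w l) else 0)) =
      (∑ l : Fin K, (if vbar ≤ v l then Real.exp (v l) else 0)) * Real.exp (-vbar) := by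
    rw [Finset.sum_mul]
    exact Finset.sum_congr rfl fun l _ => hterm l
  -- existence of a positive w
  have hexpos : ∃ k : Fin K, vbar < v k := by
    by_contra hno
    push_neg at hno
    have hsum : ∑ l : Fin K, w l < 0 := by
      have hne' : (univ : Finset (Fin K)).Nonempty := by
        have : 0 < K := by omega
        exact ⟨⟨0, this⟩, Finset.mem_univ _⟩
      refine Finset.sum_neg (fun l _ => ?_) hne'
      rw [hw]
      have := lt_of_le_of_ne (hno l) (hne l)
      linarith
    rw [hsumw] at hsum; exact lt_irrefl 0 hsum
  have hS2pos : 0 < ∑ l : Fin K, (if vbar ≤ v l then Real.exp (v l) else 0) := by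
    obtain ⟨k, hk⟩ := hexpos
    refine Finset.sum_pos' (fun l _ => ?_) ⟨k, Finset.mem_univ k, ?_⟩
    · split <;> [exact le_of_lt (Real.exp_pos _); exact le_refl 0]
    · rw [if_pos (le_of_lt hk)]; exact Real.exp_pos _
  have hS2ne : (∑ l : Fin K, (if vbar ≤ v l then Real.exp (v l) else 0)) ≠ 0 := ne_of_gt hS2pos
  have hS1ne : (∑ l : Fin K, (if m l ≠ 0 then Real.exp (w l) else 0)) ≠ 0 := by
    rw [hS]
    exact mul_ne_zero hS2ne (Real.exp_ne_zero _)
  refine ⟨hS1ne, hS2ne, fun k => ?_⟩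
  rw [hterm k, hS, evSoftmax, ← hvbar,
    mul_div_mul_right _ _ (Real.exp_ne_zero (-vbar))]
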